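/- arXiv:1107.2243 — 3 statements merged into one kernel-verified Lean document; each statement's English description precedes it below -/
import Mathlib

section
/- (Lemma A.1.) Let U ⊆ ℝⁿ be open, G : U → Matrix (Fin n) (Fin n) ℝ a C^∞ map with N_G = 0, let h₀,…,h_s : U → ℝ be C^∞ functions, and set H(x) = Σ_{k=0}^{s} h_k(x)·G(x)ᵏ. Then there exist C^∞ functions c_{j,k,r} : U → ℝ (0 ≤ j, r ≤ n−1, 0 ≤ k ≤ s) such that, setting α_j(x) = Σ_{k,r} c_{j,k,r}(x)·(G(x)ʳ)ᵀ·∇h_k(x) ∈ ℝⁿ, one has N_H(x)(u,v) = Σ_{j=0}^{n−1} ( ⟨α_j(x), u⟩·G(x)ʲ·v − ⟨α_j(x), v⟩·G(x)ʲ·u ) for all x ∈ U and u, v ∈ ℝⁿ. In particular, N_H = 0 whenever h₀,…,h_s are constant. -/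
open Matrix

/-- Directional derivative of a matrix field, entrywise. -/
noncomputable def matDirDeriv {d n : ℕ} (G : (Fin d → ℝ) → Matrix (Fin n) (Fin n) ℝ)
    (x w : Fin d → ℝ) : Matrix (Fin n) (Fin n) ℝ :=
  Matrix.of fun i j => fderiv ℝ (fun y => G y i j) x w

/-- The Nijenhuis torsion of a matrix field `G`. -/
noncomputable def nijenhuis {n : ℕ} (G : (Fin n → ℝ) → Matrix (Fin n) (Fin n) ℝ)
    (x u v : Fin n → ℝ) : Fin n → ℝ :=
  (matDirDeriv G x ((G x).mulVec u)).mulVec v - (matDirDeriv G x ((G x).mulVec v)).mulVec u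
    + (G x).mulVec ((matDirDeriv G x v).mulVec u) - (G x).mulVec ((matDirDeriv G x u).mulVec v)

/-- Gradient of a function on `ℝⁿ`. -/
noncomputable def gradV {n : ℕ} (h : (Fin n → ℝ) → ℝ) (x : Fin n → ℝ) : Fin n → ℝ :=
  fun i => fderiv ℝ h x (Pi.single i 1)

open Finset


section Helpers

variable {n : ℕ}

lemma sum_smul_mulVec {ι : Type*} (t : Finset ι) (c : ι → ℝ)
    (M : ι → Matrix (Fin n) (Fin n) ℝ) (v : Fin n → ℝ) :
    (∑ i ∈ t, c i • M i).mulVec v = ∑ i ∈ t, c i • (M i).mulVec v := by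
  induction t using Finset.cons_induction with
  | empty => simp [Matrix.zero_mulVec]
  | cons a t ha ih => simp [Finset.sum_cons, Matrix.add_mulVec, Matrix.smul_mulVec, ih]

lemma sum_mulVec {ι : Type*} (t : Finset ι) (M : ι → Matrix (Fin n) (Fin n) ℝ)
    (v : Fin n → ℝ) :
    (∑ i ∈ t, M i).mulVec v = ∑ i ∈ t, (M i).mulVec v := by
  induction t using Finset.cons_induction with
  | empty => simp [Matrix.zero_mulVec]
  | cons a t ha ih => simp [Finset.sum_cons, Matrix.add_mulVec, ih]

lemma mulVec_sum {ι : Type*} (t : Finset ι) (M : Matrix (Fin n) (Fin n) ℝ)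
    (f : ι → (Fin n → ℝ)) :
    M.mulVec (∑ i ∈ t, f i) = ∑ i ∈ t, M.mulVec (f i) := by
  induction t using Finset.cons_induction with
  | empty => simp
  | cons a t ha ih => simp [Finset.sum_cons, Matrix.mulVec_add, ih]

lemma mulVec_smul' (M : Matrix (Fin n) (Fin n) ℝ) (c : ℝ) (v : Fin n → ℝ) :
    M.mulVec (c • v) = c • M.mulVec v := by
  ext i; simp [Matrix.mulVec, dotProduct_smul]

lemma dotProduct_sum' {ι : Type*} (t : Finset ι) (g : Fin n → ℝ) (f : ι → (Fin n → ℝ)) :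
    g ⬝ᵥ (∑ i ∈ t, f i) = ∑ i ∈ t, g ⬝ᵥ f i := by
  induction t using Finset.cons_induction with
  | empty => simp
  | cons a t ha ih => simp [Finset.sum_cons, dotProduct_add, ih]

lemma sum_dotProduct' {ι : Type*} (t : Finset ι) (g : Fin n → ℝ) (f : ι → (Fin n → ℝ)) :
    (∑ i ∈ t, f i) ⬝ᵥ g = ∑ i ∈ t, f i ⬝ᵥ g := by
  induction t using Finset.cons_induction with
  | empty => simp
  | cons a t ha ih => simp [Finset.sum_cons, add_dotProduct, ih]

end Helpers

section Psi

variable {n : ℕ}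

noncomputable def psiA (A : Matrix (Fin n) (Fin n) ℝ)
    (Φ : (Fin n → ℝ) → Matrix (Fin n) (Fin n) ℝ) (u v : Fin n → ℝ) : Fin n → ℝ :=
  (Φ (A.mulVec u)).mulVec v - A.mulVec ((Φ u).mulVec v)

/-- Telescoping. -/
lemma teleA (A : Matrix (Fin n) (Fin n) ℝ) (Φ : (Fin n → ℝ) → Matrix (Fin n) (Fin n) ℝ)
    (p : ℕ) (u w : Fin n → ℝ) :
    (Φ ((A ^ p).mulVec u)).mulVec w - (A ^ p).mulVec ((Φ u).mulVec w)
      = ∑ i ∈ Finset.range p, (A ^ (p - 1 - i)).mulVec (psiA A Φ ((A ^ i).mulVec u) w) := by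
  induction p with
  | zero => simp
  | succ p ih =>
    rw [Finset.sum_range_succ]
    have h1 : (A ^ (p + 1)).mulVec u = A.mulVec ((A ^ p).mulVec u) := by
      rw [pow_succ']; exact (Matrix.mulVec_mulVec u A (A ^ p)).symm
    have h2 : (A ^ (p + 1)).mulVec ((Φ u).mulVec w)
        = A.mulVec ((A ^ p).mulVec ((Φ u).mulVec w)) := by
      rw [pow_succ']; exact (Matrix.mulVec_mulVec _ A (A ^ p)).symm
    have h3 : (Φ (A.mulVec ((A ^ p).mulVec u))).mulVec w
        = psiA A Φ ((A ^ p).mulVec u) w + A.mulVec ((Φ ((A ^ p).mulVec u)).mulVec w) := by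
      simp [psiA]
    rw [h1, h2, h3]
    have h5 : ∀ i ∈ Finset.range p,
        A.mulVec ((A ^ (p - 1 - i)).mulVec (psiA A Φ ((A ^ i).mulVec u) w))
          = (A ^ (p - i)).mulVec (psiA A Φ ((A ^ i).mulVec u) w) := by
      intro i hi
      simp only [Finset.mem_range] at hi
      have e : p - 1 - i + 1 = p - i := by omega
      rw [Matrix.mulVec_mulVec, ← pow_succ', e]
    have key : A.mulVec ((Φ ((A ^ p).mulVec u)).mulVec w - (A ^ p).mulVec ((Φ u).mulVec w))
        = ∑ i ∈ Finset.range p, (A ^ (p - i)).mulVec (psiA A Φ ((A ^ i).mulVec u) w) := by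
      rw [ih, mulVec_sum]
      exact Finset.sum_congr rfl h5
    have e1 : ∀ i : ℕ, p + 1 - 1 - i = p - i := fun i => by omega
    calc psiA A Φ ((A ^ p).mulVec u) w + A.mulVec ((Φ ((A ^ p).mulVec u)).mulVec w)
          - A.mulVec ((A ^ p).mulVec ((Φ u).mulVec w))
        = A.mulVec ((Φ ((A ^ p).mulVec u)).mulVec w - (A ^ p).mulVec ((Φ u).mulVec w))
            + psiA A Φ ((A ^ p).mulVec u) w := by rw [Matrix.mulVec_sub]; abel
      _ = ∑ i ∈ Finset.range p, (A ^ (p - i)).mulVec (psiA A Φ ((A ^ i).mulVec u) w)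
            + psiA A Φ ((A ^ p).mulVec u) w := by rw [key]
      _ = _ := by simp [e1, Nat.sub_self]

noncomputable def ZA (A : Matrix (Fin n) (Fin n) ℝ)
    (Φ : (Fin n → ℝ) → Matrix (Fin n) (Fin n) ℝ) (u v : Fin n → ℝ) (k l : ℕ) : Fin n → ℝ :=
  ∑ i ∈ Finset.range l, ∑ j ∈ Finset.range k,
    (A ^ (i + (k - 1 - j))).mulVec
      (psiA A Φ ((A ^ j).mulVec u) ((A ^ (l - 1 - i)).mulVec v)
        - psiA A Φ ((A ^ j).mulVec v) ((A ^ (l - 1 - i)).mulVec u))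

lemma Zswap (A : Matrix (Fin n) (Fin n) ℝ) (Φ : (Fin n → ℝ) → Matrix (Fin n) (Fin n) ℝ)
    (hN : ∀ u v, psiA A Φ u v = psiA A Φ v u) (u v : Fin n → ℝ) (k l : ℕ) :
    ZA A Φ u v l k = - ZA A Φ u v k l := by
  set S : ℕ → ℕ → (Fin n → ℝ) := fun i j =>
    -((A ^ (j + (k - 1 - i))).mulVec
      (psiA A Φ ((A ^ i).mulVec u) ((A ^ (l - 1 - j)).mulVec v)
        - psiA A Φ ((A ^ i).mulVec v) ((A ^ (l - 1 - j)).mulVec u))) with hS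
  have step1 : ZA A Φ u v l k = ∑ i ∈ Finset.range k, ∑ j ∈ Finset.range l,
      S (k - 1 - i) (l - 1 - j) := by
    unfold ZA
    refine Finset.sum_congr rfl fun i hi => Finset.sum_congr rfl fun j hj => ?_
    simp only [Finset.mem_range] at hi hj
    rw [hS]
    simp only
    have e1 : k - 1 - (k - 1 - i) = i := by omega
    have e2 : l - 1 - (l - 1 - j) = j := by omega
    have e3 : l - 1 - j + i = i + (l - 1 - j) := by omega
    rw [e1, e2, e3]
    rw [hN ((A ^ j).mulVec u) ((A ^ (k - 1 - i)).mulVec v),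
        hN ((A ^ j).mulVec v) ((A ^ (k - 1 - i)).mulVec u)]
    rw [← Matrix.mulVec_neg, neg_sub]
  have step2 : ∑ i ∈ Finset.range k, ∑ j ∈ Finset.range l, S (k - 1 - i) (l - 1 - j)
      = ∑ i ∈ Finset.range k, ∑ j ∈ Finset.range l, S i j := by
    rw [← Finset.sum_range_reflect (fun i => ∑ j ∈ Finset.range l, S i j) k]
    exact Finset.sum_congr rfl fun i _ =>
      (Finset.sum_range_reflect (fun j => S (k - 1 - i) j) l).symm ▸ rfl
  have step3 : ∑ i ∈ Finset.range k, ∑ j ∈ Finset.range l, S i j = - ZA A Φ u v k l := by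
    unfold ZA
    rw [Finset.sum_comm, ← Finset.sum_neg_distrib]
    refine Finset.sum_congr rfl fun j _ => ?_
    rw [← Finset.sum_neg_distrib]
  rw [step1, step2, step3]

lemma Zsum_zero {s : ℕ} (A : Matrix (Fin n) (Fin n) ℝ)
    (Φ : (Fin n → ℝ) → Matrix (Fin n) (Fin n) ℝ)
    (hN : ∀ u v, psiA A Φ u v = psiA A Φ v u) (c : Fin (s + 1) → ℝ) (u v : Fin n → ℝ) :
    ∑ k : Fin (s + 1), ∑ l : Fin (s + 1), (c k * c l) • ZA A Φ u v k l = 0 := by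
  set W := ∑ k : Fin (s + 1), ∑ l : Fin (s + 1), (c k * c l) • ZA A Φ u v (k : ℕ) (l : ℕ) with hW
  have Zswap' : ∀ a b : ℕ, ZA A Φ u v a b = - ZA A Φ u v b a :=
    fun a b => Zswap A Φ hN u v b a
  have h1 : W = -W := by
    conv_lhs => rw [hW, Finset.sum_comm]
    have e : ∀ l k : Fin (s + 1), (c k * c l) • ZA A Φ u v (k : ℕ) (l : ℕ)
        = -((c l * c k) • ZA A Φ u v (l : ℕ) (k : ℕ)) := by
      intro l k
      rw [Zswap' (k : ℕ) (l : ℕ), smul_neg, mul_comm (c k) (c l)]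
    calc ∑ l : Fin (s + 1), ∑ k : Fin (s + 1), (c k * c l) • ZA A Φ u v (k : ℕ) (l : ℕ)
        = ∑ l : Fin (s + 1), ∑ k : Fin (s + 1),
            -((c l * c k) • ZA A Φ u v (l : ℕ) (k : ℕ)) :=
          Finset.sum_congr rfl fun l _ => Finset.sum_congr rfl fun k _ => e l k
      _ = -∑ l : Fin (s + 1), ∑ k : Fin (s + 1), (c l * c k) • ZA A Φ u v (l : ℕ) (k : ℕ) := by
          simp [Finset.sum_neg_distrib]
      _ = -W := by rw [hW]
  have h2 : (2 : ℝ) • W = 0 := by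
    rw [two_smul]; nth_rewrite 2 [h1]; simp
  have := smul_eq_zero.mp h2
  simpa using this

end Psi
section Sof

variable {n : ℕ}

noncomputable def Sof (A M : Matrix (Fin n) (Fin n) ℝ) (l : ℕ) : Matrix (Fin n) (Fin n) ℝ :=
  ∑ i ∈ Finset.range l, A ^ i * M * A ^ (l - 1 - i)

lemma Sof_smulsum {m : ℕ} (A : Matrix (Fin n) (Fin n) ℝ) (c : Fin m → ℝ)
    (M : Fin m → Matrix (Fin n) (Fin n) ℝ) (l : ℕ) :
    Sof A (∑ k, c k • M k) l = ∑ k, c k • Sof A (M k) l := by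
  unfold Sof
  have e : ∀ i : ℕ, (A ^ i * ∑ k : Fin m, c k • M k) * A ^ (l - 1 - i)
      = ∑ k : Fin m, c k • (A ^ i * M k * A ^ (l - 1 - i)) := by
    intro i
    rw [Finset.mul_sum, Finset.sum_mul]
    refine Finset.sum_congr rfl fun k _ => ?_
    rw [Matrix.mul_smul, Matrix.smul_mul]
  simp only [e]
  rw [Finset.sum_comm]
  exact Finset.sum_congr rfl fun k _ => (Finset.smul_sum).symm

lemma Sof_mulVec (A M : Matrix (Fin n) (Fin n) ℝ) (l : ℕ) (z : Fin n → ℝ) :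
    (Sof A M l).mulVec z
      = ∑ i ∈ Finset.range l, (A ^ i).mulVec (M.mulVec ((A ^ (l - 1 - i)).mulVec z)) := by
  unfold Sof
  rw [sum_mulVec]
  refine Finset.sum_congr rfl fun i _ => ?_
  rw [← Matrix.mulVec_mulVec, ← Matrix.mulVec_mulVec]

lemma bracket_eq (A : Matrix (Fin n) (Fin n) ℝ)
    (Φ : (Fin n → ℝ) → Matrix (Fin n) (Fin n) ℝ) (u v : Fin n → ℝ) (k l : ℕ) :
    (Sof A (Φ ((A ^ k).mulVec u)) l).mulVec v - (Sof A (Φ ((A ^ k).mulVec v)) l).mulVec u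
      + (A ^ k).mulVec ((Sof A (Φ v) l).mulVec u)
      - (A ^ k).mulVec ((Sof A (Φ u) l).mulVec v)
      = ZA A Φ u v k l := by
  rw [Sof_mulVec, Sof_mulVec, Sof_mulVec, Sof_mulVec, mulVec_sum, mulVec_sum]
  unfold ZA
  rw [← Finset.sum_sub_distrib, ← Finset.sum_add_distrib, ← Finset.sum_sub_distrib]
  refine Finset.sum_congr rfl fun i _ => ?_
  have comm : ∀ z : Fin n → ℝ, (A ^ k).mulVec ((A ^ i).mulVec z)
      = (A ^ i).mulVec ((A ^ k).mulVec z) := by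
    intro z
    rw [Matrix.mulVec_mulVec, Matrix.mulVec_mulVec, ← pow_add, ← pow_add, Nat.add_comm]
  rw [comm, comm]
  have main : (Φ ((A ^ k).mulVec u)).mulVec ((A ^ (l - 1 - i)).mulVec v)
        - (Φ ((A ^ k).mulVec v)).mulVec ((A ^ (l - 1 - i)).mulVec u)
        + (A ^ k).mulVec ((Φ v).mulVec ((A ^ (l - 1 - i)).mulVec u))
        - (A ^ k).mulVec ((Φ u).mulVec ((A ^ (l - 1 - i)).mulVec v))
      = ((Φ ((A ^ k).mulVec u)).mulVec ((A ^ (l - 1 - i)).mulVec v)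
          - (A ^ k).mulVec ((Φ u).mulVec ((A ^ (l - 1 - i)).mulVec v)))
        - ((Φ ((A ^ k).mulVec v)).mulVec ((A ^ (l - 1 - i)).mulVec u)
          - (A ^ k).mulVec ((Φ v).mulVec ((A ^ (l - 1 - i)).mulVec u))) := by abel
  calc (A ^ i).mulVec ((Φ ((A ^ k).mulVec u)).mulVec ((A ^ (l - 1 - i)).mulVec v))
        - (A ^ i).mulVec ((Φ ((A ^ k).mulVec v)).mulVec ((A ^ (l - 1 - i)).mulVec u))
        + (A ^ i).mulVec ((A ^ k).mulVec ((Φ v).mulVec ((A ^ (l - 1 - i)).mulVec u)))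
        - (A ^ i).mulVec ((A ^ k).mulVec ((Φ u).mulVec ((A ^ (l - 1 - i)).mulVec v)))
      = (A ^ i).mulVec
          (((Φ ((A ^ k).mulVec u)).mulVec ((A ^ (l - 1 - i)).mulVec v)
              - (A ^ k).mulVec ((Φ u).mulVec ((A ^ (l - 1 - i)).mulVec v)))
            - ((Φ ((A ^ k).mulVec v)).mulVec ((A ^ (l - 1 - i)).mulVec u)
              - (A ^ k).mulVec ((Φ v).mulVec ((A ^ (l - 1 - i)).mulVec u)))) := by
        rw [Matrix.mulVec_sub, Matrix.mulVec_sub, Matrix.mulVec_sub]; abel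
    _ = (A ^ i).mulVec
          ((∑ j ∈ Finset.range k, (A ^ (k - 1 - j)).mulVec
              (psiA A Φ ((A ^ j).mulVec u) ((A ^ (l - 1 - i)).mulVec v)))
            - ∑ j ∈ Finset.range k, (A ^ (k - 1 - j)).mulVec
              (psiA A Φ ((A ^ j).mulVec v) ((A ^ (l - 1 - i)).mulVec u))) := by
        rw [← teleA, ← teleA]
    _ = ∑ j ∈ Finset.range k, (A ^ (i + (k - 1 - j))).mulVec
          (psiA A Φ ((A ^ j).mulVec u) ((A ^ (l - 1 - i)).mulVec v)
            - psiA A Φ ((A ^ j).mulVec v) ((A ^ (l - 1 - i)).mulVec u)) := by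
        rw [← Finset.sum_sub_distrib, mulVec_sum]
        refine Finset.sum_congr rfl fun j _ => ?_
        rw [← Matrix.mulVec_sub, Matrix.mulVec_mulVec, ← pow_add]

lemma phi_part {s : ℕ} (A : Matrix (Fin n) (Fin n) ℝ)
    (Φ : (Fin n → ℝ) → Matrix (Fin n) (Fin n) ℝ)
    (hΦ : ∀ (c : Fin (s + 1) → ℝ) (w : Fin (s + 1) → (Fin n → ℝ)),
      Φ (∑ k, c k • w k) = ∑ k, c k • Φ (w k))
    (hN : ∀ u v, psiA A Φ u v = psiA A Φ v u)
    (c : Fin (s + 1) → ℝ) (u v : Fin n → ℝ) :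
    (∑ l, c l • Sof A (Φ ((∑ k, c k • A ^ (k : ℕ)).mulVec u)) (l : ℕ)).mulVec v
      - (∑ l, c l • Sof A (Φ ((∑ k, c k • A ^ (k : ℕ)).mulVec v)) (l : ℕ)).mulVec u
      + (∑ k, c k • A ^ (k : ℕ)).mulVec ((∑ l, c l • Sof A (Φ v) (l : ℕ)).mulVec u)
      - (∑ k, c k • A ^ (k : ℕ)).mulVec ((∑ l, c l • Sof A (Φ u) (l : ℕ)).mulVec v)
      = 0 := by
  have hPhiH : ∀ w : Fin n → ℝ, Φ ((∑ k, c k • A ^ (k : ℕ)).mulVec w)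
      = ∑ k, c k • Φ ((A ^ (k : ℕ)).mulVec w) := by
    intro w
    rw [sum_smul_mulVec, hΦ]
  -- term 1
  have T1 : ∀ w z : Fin n → ℝ,
      (∑ l, c l • Sof A (Φ ((∑ k, c k • A ^ (k : ℕ)).mulVec w)) (l : ℕ)).mulVec z
        = ∑ l : Fin (s + 1), ∑ k : Fin (s + 1),
            (c l * c k) • (Sof A (Φ ((A ^ (k : ℕ)).mulVec w)) (l : ℕ)).mulVec z := by
    intro w z
    rw [sum_smul_mulVec]
    refine Finset.sum_congr rfl fun l _ => ?_
    rw [hPhiH, Sof_smulsum, sum_smul_mulVec, Finset.smul_sum]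
    refine Finset.sum_congr rfl fun k _ => ?_
    rw [smul_smul]
  -- term 3
  have T3 : ∀ w z : Fin n → ℝ,
      (∑ k, c k • A ^ (k : ℕ)).mulVec ((∑ l, c l • Sof A (Φ w) (l : ℕ)).mulVec z)
        = ∑ l : Fin (s + 1), ∑ k : Fin (s + 1),
            (c l * c k) • (A ^ (k : ℕ)).mulVec ((Sof A (Φ w) (l : ℕ)).mulVec z) := by
    intro w z
    rw [sum_smul_mulVec, sum_smul_mulVec]
    have e : ∀ k : Fin (s + 1),
        c k • (A ^ (k : ℕ)).mulVec (∑ l, c l • (Sof A (Φ w) (l : ℕ)).mulVec z)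
          = ∑ l : Fin (s + 1),
              (c l * c k) • (A ^ (k : ℕ)).mulVec ((Sof A (Φ w) (l : ℕ)).mulVec z) := by
      intro k
      rw [mulVec_sum, Finset.smul_sum]
      refine Finset.sum_congr rfl fun l _ => ?_
      rw [mulVec_smul', smul_smul, mul_comm (c k) (c l)]
    rw [Finset.sum_congr rfl fun k _ => e k, Finset.sum_comm]
  rw [T1, T1, T3, T3]
  rw [← Finset.sum_sub_distrib, ← Finset.sum_add_distrib, ← Finset.sum_sub_distrib]
  have : ∀ l : Fin (s + 1),
      (∑ k : Fin (s + 1), (c l * c k) • (Sof A (Φ ((A ^ (k : ℕ)).mulVec u)) (l : ℕ)).mulVec v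
        - ∑ k : Fin (s + 1), (c l * c k) • (Sof A (Φ ((A ^ (k : ℕ)).mulVec v)) (l : ℕ)).mulVec u
        + ∑ k : Fin (s + 1), (c l * c k) • (A ^ (k : ℕ)).mulVec ((Sof A (Φ v) (l : ℕ)).mulVec u)
        - ∑ k : Fin (s + 1), (c l * c k) • (A ^ (k : ℕ)).mulVec ((Sof A (Φ u) (l : ℕ)).mulVec v))
      = ∑ k : Fin (s + 1), (c k * c l) • ZA A Φ u v (k : ℕ) (l : ℕ) := by
    intro l
    rw [← Finset.sum_sub_distrib, ← Finset.sum_add_distrib, ← Finset.sum_sub_distrib]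
    refine Finset.sum_congr rfl fun k _ => ?_
    rw [← smul_sub, ← smul_add, ← smul_sub, bracket_eq, mul_comm (c l) (c k)]
  rw [Finset.sum_congr rfl fun l _ => this l, Finset.sum_comm]
  exact Zsum_zero A Φ hN c u v

end Sof
section Grad

variable {n : ℕ}

lemma grad_part {s : ℕ} (A : Matrix (Fin n) (Fin n) ℝ)
    (c : Fin (s + 1) → ℝ) (g : Fin (s + 1) → (Fin n → ℝ)) (u v : Fin n → ℝ) :
    (∑ k, (g k ⬝ᵥ (∑ k', c k' • A ^ (k' : ℕ)).mulVec u) • A ^ (k : ℕ)).mulVec v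
      - (∑ k, (g k ⬝ᵥ (∑ k', c k' • A ^ (k' : ℕ)).mulVec v) • A ^ (k : ℕ)).mulVec u
      + (∑ k', c k' • A ^ (k' : ℕ)).mulVec ((∑ k, (g k ⬝ᵥ v) • A ^ (k : ℕ)).mulVec u)
      - (∑ k', c k' • A ^ (k' : ℕ)).mulVec ((∑ k, (g k ⬝ᵥ u) • A ^ (k : ℕ)).mulVec v)
      = ∑ k : Fin (s + 1), ∑ l : Fin (s + 1), c l •
          ((g k ⬝ᵥ (A ^ (l : ℕ)).mulVec u) • (A ^ (k : ℕ)).mulVec v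
            - (g k ⬝ᵥ (A ^ (l : ℕ)).mulVec v) • (A ^ (k : ℕ)).mulVec u
            + (g k ⬝ᵥ v) • (A ^ ((k : ℕ) + (l : ℕ))).mulVec u
            - (g k ⬝ᵥ u) • (A ^ ((k : ℕ) + (l : ℕ))).mulVec v) := by
  have E1 : ∀ w z : Fin n → ℝ,
      (∑ k, (g k ⬝ᵥ (∑ k', c k' • A ^ (k' : ℕ)).mulVec w) • A ^ (k : ℕ)).mulVec z
        = ∑ k : Fin (s + 1), ∑ l : Fin (s + 1),
            (c l * (g k ⬝ᵥ (A ^ (l : ℕ)).mulVec w)) • (A ^ (k : ℕ)).mulVec z := by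
    intro w z
    rw [sum_smul_mulVec]
    refine Finset.sum_congr rfl fun k _ => ?_
    rw [sum_smul_mulVec, dotProduct_sum']
    rw [Finset.sum_smul]
    refine Finset.sum_congr rfl fun l _ => ?_
    rw [dotProduct_smul, smul_eq_mul]
  have E2 : ∀ w z : Fin n → ℝ,
      (∑ k', c k' • A ^ (k' : ℕ)).mulVec ((∑ k, (g k ⬝ᵥ w) • A ^ (k : ℕ)).mulVec z)
        = ∑ k : Fin (s + 1), ∑ l : Fin (s + 1),
            (c l * (g k ⬝ᵥ w)) • (A ^ ((k : ℕ) + (l : ℕ))).mulVec z := by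
    intro w z
    have inner : (∑ k, (g k ⬝ᵥ w) • A ^ (k : ℕ)).mulVec z
        = ∑ k : Fin (s + 1), (g k ⬝ᵥ w) • (A ^ (k : ℕ)).mulVec z := sum_smul_mulVec _ _ _ _
    rw [inner, sum_smul_mulVec]
    conv_rhs => rw [Finset.sum_comm]
    refine Finset.sum_congr rfl fun l _ => ?_
    rw [_root_.mulVec_sum, Finset.smul_sum]
    refine Finset.sum_congr rfl fun k _ => ?_
    rw [mulVec_smul', Matrix.mulVec_mulVec, ← pow_add, smul_smul,
        Nat.add_comm (l : ℕ) (k : ℕ)]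
  rw [E1, E1, E2, E2]
  rw [← Finset.sum_sub_distrib, ← Finset.sum_add_distrib, ← Finset.sum_sub_distrib]
  refine Finset.sum_congr rfl fun k _ => ?_
  rw [← Finset.sum_sub_distrib, ← Finset.sum_add_distrib, ← Finset.sum_sub_distrib]
  refine Finset.sum_congr rfl fun l _ => ?_
  module

end Grad
section Reduce

variable {n : ℕ}

lemma transdot (M : Matrix (Fin n) (Fin n) ℝ) (g z : Fin n → ℝ) :
    (Mᵀ.mulVec g) ⬝ᵥ z = g ⬝ᵥ M.mulVec z := by
  rw [Matrix.mulVec_transpose, Matrix.dotProduct_mulVec]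

lemma reduce_eq {s : ℕ} (hn : 0 < n) (A : Matrix (Fin n) (Fin n) ℝ) (b : ℕ → Fin n → ℝ)
    (hb : ∀ m : ℕ, A ^ m = ∑ r : Fin n, b m r • A ^ (r : ℕ))
    (cc : Fin (s + 1) → ℝ) (g : Fin (s + 1) → (Fin n → ℝ)) (u v : Fin n → ℝ) :
    ∑ k : Fin (s + 1), ∑ l : Fin (s + 1), cc l •
        ((g k ⬝ᵥ (A ^ (l : ℕ)).mulVec u) • (A ^ (k : ℕ)).mulVec v
          - (g k ⬝ᵥ (A ^ (l : ℕ)).mulVec v) • (A ^ (k : ℕ)).mulVec u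
          + (g k ⬝ᵥ v) • (A ^ ((k : ℕ) + (l : ℕ))).mulVec u
          - (g k ⬝ᵥ u) • (A ^ ((k : ℕ) + (l : ℕ))).mulVec v)
      = ∑ j : Fin n,
          (((∑ k : Fin (s + 1), ∑ r : Fin n, (∑ l : Fin (s + 1), cc l *
                (b (l : ℕ) r * b (k : ℕ) j
                  - (if r = (⟨0, hn⟩ : Fin n) then (1 : ℝ) else 0) * b ((k : ℕ) + (l : ℕ)) j))
              • ((A ^ (r : ℕ))ᵀ.mulVec (g k))) ⬝ᵥ u) • (A ^ (j : ℕ)).mulVec v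
            - ((∑ k : Fin (s + 1), ∑ r : Fin n, (∑ l : Fin (s + 1), cc l *
                (b (l : ℕ) r * b (k : ℕ) j
                  - (if r = (⟨0, hn⟩ : Fin n) then (1 : ℝ) else 0) * b ((k : ℕ) + (l : ℕ)) j))
              • ((A ^ (r : ℕ))ᵀ.mulVec (g k))) ⬝ᵥ v) • (A ^ (j : ℕ)).mulVec u) := by
  classical
  have exp1 : ∀ (z : Fin n → ℝ) (m : ℕ) (a : ℝ),
      a • (A ^ m).mulVec z = ∑ j : Fin n, (a * b m j) • (A ^ (j : ℕ)).mulVec z := by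
    intro z m a
    conv_lhs => rw [hb m]
    rw [sum_smul_mulVec, Finset.smul_sum]
    exact Finset.sum_congr rfl fun j _ => by rw [smul_smul]
  have dotexp : ∀ (gk z : Fin n → ℝ) (m : ℕ),
      gk ⬝ᵥ (A ^ m).mulVec z = ∑ r : Fin n, b m r * (gk ⬝ᵥ (A ^ (r : ℕ)).mulVec z) := by
    intro gk z m
    conv_lhs => rw [hb m]
    rw [sum_smul_mulVec, dotProduct_sum']
    exact Finset.sum_congr rfl fun r _ => by rw [dotProduct_smul, smul_eq_mul]
  set F : Fin (s + 1) → Fin (s + 1) → Fin n → (Fin n → ℝ) := fun k l j =>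
    ((∑ r : Fin n, cc l * (b (l : ℕ) r * b (k : ℕ) j) * (g k ⬝ᵥ (A ^ (r : ℕ)).mulVec u))
        - cc l * b ((k : ℕ) + (l : ℕ)) j * (g k ⬝ᵥ u)) • (A ^ (j : ℕ)).mulVec v
      - ((∑ r : Fin n, cc l * (b (l : ℕ) r * b (k : ℕ) j) * (g k ⬝ᵥ (A ^ (r : ℕ)).mulVec v))
        - cc l * b ((k : ℕ) + (l : ℕ)) j * (g k ⬝ᵥ v)) • (A ^ (j : ℕ)).mulVec u with hF
  have LHS_eq : ∀ (k l : Fin (s + 1)),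
      cc l • ((g k ⬝ᵥ (A ^ (l : ℕ)).mulVec u) • (A ^ (k : ℕ)).mulVec v
          - (g k ⬝ᵥ (A ^ (l : ℕ)).mulVec v) • (A ^ (k : ℕ)).mulVec u
          + (g k ⬝ᵥ v) • (A ^ ((k : ℕ) + (l : ℕ))).mulVec u
          - (g k ⬝ᵥ u) • (A ^ ((k : ℕ) + (l : ℕ))).mulVec v)
        = ∑ j : Fin n, F k l j := by
    intro k l
    have t1 : ∀ w z : Fin n → ℝ, (g k ⬝ᵥ (A ^ (l : ℕ)).mulVec w) • (A ^ (k : ℕ)).mulVec z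
        = ∑ j : Fin n, (∑ r : Fin n,
            (b (l : ℕ) r * (g k ⬝ᵥ (A ^ (r : ℕ)).mulVec w)) * b (k : ℕ) j)
              • (A ^ (j : ℕ)).mulVec z := by
      intro w z
      rw [dotexp (g k) w (l : ℕ), Finset.sum_smul]
      calc ∑ r : Fin n, (b (l : ℕ) r * (g k ⬝ᵥ (A ^ (r : ℕ)).mulVec w)) • (A ^ (k : ℕ)).mulVec z
          = ∑ r : Fin n, ∑ j : Fin n,
              ((b (l : ℕ) r * (g k ⬝ᵥ (A ^ (r : ℕ)).mulVec w)) * b (k : ℕ) j)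
                • (A ^ (j : ℕ)).mulVec z :=
            Finset.sum_congr rfl fun r _ => exp1 z (k : ℕ) _
        _ = _ := by
            rw [Finset.sum_comm]
            exact Finset.sum_congr rfl fun j _ => (Finset.sum_smul).symm
    rw [t1 u v, t1 v u, exp1 u ((k : ℕ) + (l : ℕ)) (g k ⬝ᵥ v),
        exp1 v ((k : ℕ) + (l : ℕ)) (g k ⬝ᵥ u)]
    rw [← Finset.sum_sub_distrib, ← Finset.sum_add_distrib, ← Finset.sum_sub_distrib,
        Finset.smul_sum]
    refine Finset.sum_congr rfl fun j _ => ?_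
    simp only [hF]
    have e1 : ∀ w : Fin n → ℝ,
        (∑ r : Fin n, cc l * (b (l : ℕ) r * b (k : ℕ) j) * (g k ⬝ᵥ (A ^ (r : ℕ)).mulVec w))
          = cc l * ∑ r : Fin n,
              (b (l : ℕ) r * (g k ⬝ᵥ (A ^ (r : ℕ)).mulVec w)) * b (k : ℕ) j := by
      intro w
      rw [Finset.mul_sum]
      exact Finset.sum_congr rfl fun r _ => by ring
    rw [e1 u, e1 v]
    module
  -- RHS processing
  have R1 : ∀ (j : Fin n) (w : Fin n → ℝ),
      ((∑ k : Fin (s + 1), ∑ r : Fin n, (∑ l : Fin (s + 1), cc l *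
          (b (l : ℕ) r * b (k : ℕ) j
            - (if r = (⟨0, hn⟩ : Fin n) then (1 : ℝ) else 0) * b ((k : ℕ) + (l : ℕ)) j))
        • ((A ^ (r : ℕ))ᵀ.mulVec (g k))) ⬝ᵥ w)
        = ∑ k : Fin (s + 1), ∑ r : Fin n, (∑ l : Fin (s + 1), cc l *
            (b (l : ℕ) r * b (k : ℕ) j
              - (if r = (⟨0, hn⟩ : Fin n) then (1 : ℝ) else 0) * b ((k : ℕ) + (l : ℕ)) j))
            * (g k ⬝ᵥ (A ^ (r : ℕ)).mulVec w) := by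
    intro j w
    rw [sum_dotProduct']
    refine Finset.sum_congr rfl fun k _ => ?_
    rw [sum_dotProduct']
    refine Finset.sum_congr rfl fun r _ => ?_
    rw [smul_dotProduct, transdot, smul_eq_mul]
  have R2 : ∀ (j : Fin n) (k : Fin (s + 1)) (w : Fin n → ℝ),
      (∑ r : Fin n, (∑ l : Fin (s + 1), cc l *
          (b (l : ℕ) r * b (k : ℕ) j
            - (if r = (⟨0, hn⟩ : Fin n) then (1 : ℝ) else 0) * b ((k : ℕ) + (l : ℕ)) j))
          * (g k ⬝ᵥ (A ^ (r : ℕ)).mulVec w))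
        = ∑ l : Fin (s + 1),
            ((∑ r : Fin n, cc l * (b (l : ℕ) r * b (k : ℕ) j) * (g k ⬝ᵥ (A ^ (r : ℕ)).mulVec w))
              - cc l * b ((k : ℕ) + (l : ℕ)) j * (g k ⬝ᵥ w)) := by
    intro j k w
    have step : ∀ r : Fin n, (∑ l : Fin (s + 1), cc l *
          (b (l : ℕ) r * b (k : ℕ) j
            - (if r = (⟨0, hn⟩ : Fin n) then (1 : ℝ) else 0) * b ((k : ℕ) + (l : ℕ)) j))
          * (g k ⬝ᵥ (A ^ (r : ℕ)).mulVec w)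
        = ∑ l : Fin (s + 1),
            (cc l * (b (l : ℕ) r * b (k : ℕ) j) * (g k ⬝ᵥ (A ^ (r : ℕ)).mulVec w)
              - (if r = (⟨0, hn⟩ : Fin n) then
                  cc l * b ((k : ℕ) + (l : ℕ)) j * (g k ⬝ᵥ (A ^ (r : ℕ)).mulVec w) else 0)) := by
      intro r
      rw [Finset.sum_mul]
      refine Finset.sum_congr rfl fun l _ => ?_
      split <;> ring
    rw [Finset.sum_congr rfl fun r _ => step r, Finset.sum_comm]
    refine Finset.sum_congr rfl fun l _ => ?_
    rw [Finset.sum_sub_distrib]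
    congr 1
    rw [Finset.sum_ite_eq' Finset.univ (⟨0, hn⟩ : Fin n)
      (fun r => cc l * b ((k : ℕ) + (l : ℕ)) j * (g k ⬝ᵥ (A ^ (r : ℕ)).mulVec w))]
    simp [Matrix.one_mulVec]
  calc ∑ k : Fin (s + 1), ∑ l : Fin (s + 1), cc l •
        ((g k ⬝ᵥ (A ^ (l : ℕ)).mulVec u) • (A ^ (k : ℕ)).mulVec v
          - (g k ⬝ᵥ (A ^ (l : ℕ)).mulVec v) • (A ^ (k : ℕ)).mulVec u
          + (g k ⬝ᵥ v) • (A ^ ((k : ℕ) + (l : ℕ))).mulVec u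
          - (g k ⬝ᵥ u) • (A ^ ((k : ℕ) + (l : ℕ))).mulVec v)
      = ∑ k : Fin (s + 1), ∑ l : Fin (s + 1), ∑ j : Fin n, F k l j :=
        Finset.sum_congr rfl fun k _ => Finset.sum_congr rfl fun l _ => LHS_eq k l
    _ = ∑ k : Fin (s + 1), ∑ j : Fin n, ∑ l : Fin (s + 1), F k l j :=
        Finset.sum_congr rfl fun k _ => Finset.sum_comm
    _ = _ := by
        rw [Finset.sum_comm]
        refine Finset.sum_congr rfl fun j _ => ?_
        rw [R1 j u, R1 j v]
        rw [Finset.sum_congr rfl fun k _ => R2 j k u,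
            Finset.sum_congr rfl fun k _ => R2 j k v]
        rw [Finset.sum_smul, Finset.sum_smul, ← Finset.sum_sub_distrib]
        refine Finset.sum_congr rfl fun k _ => ?_
        rw [Finset.sum_smul, Finset.sum_smul, ← Finset.sum_sub_distrib]

end Reduce
section CH

variable {n : ℕ}

lemma contDiff_entry (i j : Fin n) :
    ContDiff ℝ (⊤ : ℕ∞) (fun A : (Fin n → Fin n → ℝ) => A i j) :=
  ((ContinuousLinearMap.proj (R := ℝ) (φ := fun _ : Fin n => ℝ) j).comp
    (ContinuousLinearMap.proj (R := ℝ)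
      (φ := fun _ : Fin n => (Fin n → ℝ)) i)).contDiff

lemma contDiff_coeff_prod {ι : Type*} (t : Finset ι)
    (f : ι → (Fin n → Fin n → ℝ) → Polynomial ℝ)
    (hf : ∀ i ∈ t, ∀ m : ℕ, ContDiff ℝ (⊤ : ℕ∞) fun A => (f i A).coeff m) :
    ∀ m : ℕ, ContDiff ℝ (⊤ : ℕ∞) fun A => (∏ i ∈ t, f i A).coeff m := by
  induction t using Finset.cons_induction with
  | empty =>
    intro m
    simp only [Finset.prod_empty, Polynomial.coeff_one]
    exact contDiff_const
  | cons a t ha ih =>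
    intro m
    simp only [Finset.prod_cons, Polynomial.coeff_mul]
    exact ContDiff.sum fun p _ =>
      (hf a (Finset.mem_cons_self a t) p.1).mul
        (ih (fun i hi m' => hf i (Finset.mem_cons_of_mem hi) m') p.2)

lemma contDiff_charmatrix_coeff (i j : Fin n) (m : ℕ) :
    ContDiff ℝ (⊤ : ℕ∞)
      fun A : (Fin n → Fin n → ℝ) => ((charmatrix (Matrix.of A)) i j).coeff m := by
  by_cases hij : i = j
  · subst hij
    have e : (fun A : (Fin n → Fin n → ℝ) => ((charmatrix (Matrix.of A)) i i).coeff m)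
        = fun A => (Polynomial.X : Polynomial ℝ).coeff m - (if m = 0 then A i i else 0) := by
      funext A
      rw [charmatrix_apply_eq, Polynomial.coeff_sub, Polynomial.coeff_C]
      simp
    rw [e]
    by_cases hm : m = 0
    · simp only [if_pos hm]
      exact contDiff_const.sub (contDiff_entry i i)
    · simp only [if_neg hm]
      exact contDiff_const.sub contDiff_const
  · have e : (fun A : (Fin n → Fin n → ℝ) => ((charmatrix (Matrix.of A)) i j).coeff m)
        = fun A => -(if m = 0 then A i j else 0) := by
      funext A
      rw [charmatrix_apply_ne _ _ _ hij, Polynomial.coeff_neg, Polynomial.coeff_C]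
      simp
    rw [e]
    by_cases hm : m = 0
    · simp only [if_pos hm]
      exact (contDiff_entry i j).neg
    · simp only [if_neg hm]
      exact contDiff_const.neg

lemma contDiff_charpoly_coeff (r : ℕ) :
    ContDiff ℝ (⊤ : ℕ∞)
      fun A : (Fin n → Fin n → ℝ) => (Matrix.of A).charpoly.coeff r := by
  have e : (fun A : (Fin n → Fin n → ℝ) => (Matrix.of A).charpoly.coeff r)
      = fun A => ∑ σ : Equiv.Perm (Fin n),
          ((Equiv.Perm.sign σ : ℤ) : ℝ) * (∏ i, (charmatrix (Matrix.of A)) (σ i) i).coeff r := by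
    funext A
    rw [Matrix.charpoly, Matrix.det_apply, Polynomial.finset_sum_coeff]
    refine Finset.sum_congr rfl fun σ _ => ?_
    rw [Polynomial.coeff_smul, Units.smul_def, zsmul_eq_mul]
  rw [e]
  exact ContDiff.sum fun σ _ => contDiff_const.mul
    (contDiff_coeff_prod Finset.univ _
      (fun i _ m => contDiff_charmatrix_coeff (σ i) i m) r)

lemma cayley_pow_n (A : Matrix (Fin n) (Fin n) ℝ) :
    A ^ n = ∑ r : Fin n, (-(A.charpoly.coeff (r : ℕ))) • A ^ (r : ℕ) := by
  have h0 := Matrix.aeval_self_charpoly A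
  rw [Polynomial.aeval_eq_sum_range] at h0
  have hdeg : A.charpoly.natDegree = n := by
    rw [Matrix.charpoly_natDegree_eq_dim, Fintype.card_fin]
  rw [hdeg, Finset.sum_range_succ] at h0
  have hlead : A.charpoly.coeff n = 1 := by
    have h := A.charpoly_monic
    rw [Polynomial.Monic, Polynomial.leadingCoeff, hdeg] at h
    exact h
  rw [hlead, one_smul] at h0
  have h1 : A ^ n = -∑ i ∈ Finset.range n, A.charpoly.coeff i • A ^ i := by
    linear_combination (norm := abel) h0
  rw [h1, ← Fin.sum_univ_eq_sum_range (fun i => A.charpoly.coeff i • A ^ i) n,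
    ← Finset.sum_neg_distrib]
  exact Finset.sum_congr rfl fun r _ => by rw [neg_smul]

end CH
section Analysis

variable {n : ℕ} {U : Set (Fin n → ℝ)} {G : (Fin n → ℝ) → Matrix (Fin n) (Fin n) ℝ}

lemma entries_pow_contDiffOn (hGs : ∀ i j, ContDiffOn ℝ (⊤ : ℕ∞) (fun x => G x i j) U)
    (k : ℕ) : ∀ i j, ContDiffOn ℝ (⊤ : ℕ∞) (fun x => (G x ^ k) i j) U := by
  induction k with
  | zero =>
    intro i j
    have e : (fun x => (G x ^ 0) i j) = fun _ => (1 : Matrix (Fin n) (Fin n) ℝ) i j := by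
      funext x; rw [pow_zero]
    rw [e]; exact contDiffOn_const
  | succ k ih =>
    intro i j
    have e : (fun x => (G x ^ (k + 1)) i j) = fun x => ∑ m, (G x ^ k) i m * G x m j := by
      funext x; rw [pow_succ, Matrix.mul_apply]
    rw [e]
    exact ContDiffOn.sum fun m _ => (ih i m).mul (hGs m j)

lemma diffAt_of_contDiffOn (hU : IsOpen U) {f : (Fin n → ℝ) → ℝ}
    (hf : ContDiffOn ℝ (⊤ : ℕ∞) f U) {x : Fin n → ℝ} (hx : x ∈ U) :
    DifferentiableAt ℝ f x :=
  (hf.differentiableOn (by simp)).differentiableAt (hU.mem_nhds hx)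

lemma matDirDeriv_mul (F K : (Fin n → ℝ) → Matrix (Fin n) (Fin n) ℝ) (x w : Fin n → ℝ)
    (hF : ∀ i j, DifferentiableAt ℝ (fun y => F y i j) x)
    (hK : ∀ i j, DifferentiableAt ℝ (fun y => K y i j) x) :
    matDirDeriv (fun y => F y * K y) x w
      = matDirDeriv F x w * K x + F x * matDirDeriv K x w := by
  ext i j
  simp only [matDirDeriv, Matrix.of_apply, Matrix.add_apply, Matrix.mul_apply]
  rw [fderiv_fun_sum (fun m _ => ((hF i m).fun_mul (hK m j))), ContinuousLinearMap.sum_apply,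
    ← Finset.sum_add_distrib]
  refine Finset.sum_congr rfl fun m _ => ?_
  rw [fderiv_fun_mul (hF i m) (hK m j)]
  simp only [ContinuousLinearMap.add_apply, ContinuousLinearMap.coe_smul',
    Pi.smul_apply, smul_eq_mul]
  ring

lemma Sof_succ (A M : Matrix (Fin n) (Fin n) ℝ) (k : ℕ) :
    Sof A M (k + 1) = Sof A M k * A + A ^ k * M := by
  unfold Sof
  rw [Finset.sum_range_succ, Finset.sum_mul]
  congr 1
  · refine Finset.sum_congr rfl fun i hi => ?_
    simp only [Finset.mem_range] at hi
    have e : k + 1 - 1 - i = (k - 1 - i) + 1 := by omega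
    rw [e, pow_succ, ← mul_assoc]
  · have e : k + 1 - 1 - k = 0 := by omega
    rw [e, pow_zero, mul_one]

lemma matDirDeriv_pow (hU : IsOpen U)
    (hGs : ∀ i j, ContDiffOn ℝ (⊤ : ℕ∞) (fun x => G x i j) U)
    {x : Fin n → ℝ} (hx : x ∈ U) (w : Fin n → ℝ) (k : ℕ) :
    matDirDeriv (fun y => G y ^ k) x w = Sof (G x) (matDirDeriv G x w) k := by
  induction k with
  | zero =>
    ext i j
    simp only [matDirDeriv, Matrix.of_apply]
    have e : (fun y => (G y ^ 0) i j) = fun _ => (1 : Matrix (Fin n) (Fin n) ℝ) i j := by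
      funext y; rw [pow_zero]
    rw [e, fderiv_fun_const]
    simp [Sof]
  | succ k ih =>
    have e : (fun y => G y ^ (k + 1)) = fun y => (G y ^ k) * G y := by
      funext y; rw [pow_succ]
    rw [e, matDirDeriv_mul (fun y => G y ^ k) G x w
        (fun i j => diffAt_of_contDiffOn hU (entries_pow_contDiffOn hGs k i j) hx)
        (fun i j => diffAt_of_contDiffOn hU (hGs i j) hx),
      ih, Sof_succ]

lemma matDirDeriv_lin {m : ℕ} (F : (Fin n → ℝ) → Matrix (Fin n) (Fin n) ℝ)
    (x : Fin n → ℝ) (c : Fin m → ℝ) (w : Fin m → (Fin n → ℝ)) :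
    matDirDeriv F x (∑ k, c k • w k) = ∑ k, c k • matDirDeriv F x (w k) := by
  ext i j
  simp [matDirDeriv, map_sum, ContinuousLinearMap.map_smul, Matrix.sum_apply, smul_eq_mul]

lemma fderiv_eq_grad (f : (Fin n → ℝ) → ℝ) (x w : Fin n → ℝ) :
    fderiv ℝ f x w = gradV f x ⬝ᵥ w := by
  have hw : w = ∑ i : Fin n, w i • (Pi.single i (1 : ℝ) : Fin n → ℝ) := by
    funext j
    rw [Finset.sum_apply]
    have e : ∀ i : Fin n, (w i • (Pi.single i (1 : ℝ) : Fin n → ℝ)) j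
        = if j = i then w i else 0 := by
      intro i
      by_cases hji : j = i <;> simp [Pi.single_apply, hji]
    rw [Finset.sum_congr rfl fun i _ => e i, Finset.sum_ite_eq]
    simp
  conv_lhs => rw [hw]
  rw [map_sum]
  simp only [ContinuousLinearMap.map_smul, smul_eq_mul]
  unfold gradV dotProduct
  exact Finset.sum_congr rfl fun i _ => by ring

lemma matDirDeriv_H {s : ℕ} (hU : IsOpen U)
    (hGs : ∀ i j, ContDiffOn ℝ (⊤ : ℕ∞) (fun x => G x i j) U)
    (h : Fin (s + 1) → (Fin n → ℝ) → ℝ)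
    (hh : ∀ k, ContDiffOn ℝ (⊤ : ℕ∞) (h k) U)
    {x : Fin n → ℝ} (hx : x ∈ U) (w : Fin n → ℝ) :
    matDirDeriv (fun y => ∑ k, h k y • G y ^ (k : ℕ)) x w
      = (∑ k, (gradV (h k) x ⬝ᵥ w) • G x ^ (k : ℕ))
        + ∑ k, h k x • Sof (G x) (matDirDeriv G x w) (k : ℕ) := by
  have hdp : ∀ (k : Fin (s + 1)) (i j : Fin n),
      DifferentiableAt ℝ (fun y => (G y ^ (k : ℕ)) i j) x :=
    fun k i j => diffAt_of_contDiffOn hU (entries_pow_contDiffOn hGs (k : ℕ) i j) hx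
  have hdh : ∀ k : Fin (s + 1), DifferentiableAt ℝ (h k) x :=
    fun k => diffAt_of_contDiffOn hU (hh k) hx
  ext i j
  simp only [matDirDeriv, Matrix.of_apply, Matrix.add_apply, Matrix.sum_apply,
    Matrix.smul_apply, smul_eq_mul]
  rw [fderiv_fun_sum (fun k _ => (hdh k).fun_mul (hdp k i j)), ContinuousLinearMap.sum_apply,
    ← Finset.sum_add_distrib]
  refine Finset.sum_congr rfl fun k _ => ?_
  rw [fderiv_fun_mul (hdh k) (hdp k i j)]
  have hpow : (Sof (G x) (Matrix.of fun i j => fderiv ℝ (fun y => G y i j) x w) (k : ℕ)) i j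
      = fderiv ℝ (fun y => (G y ^ (k : ℕ)) i j) x w := by
    rw [show (Matrix.of fun i j => fderiv ℝ (fun y => G y i j) x w) = matDirDeriv G x w
        from rfl, ← matDirDeriv_pow hU hGs hx w (k : ℕ)]
    simp [matDirDeriv]
  rw [hpow]
  simp only [ContinuousLinearMap.add_apply, ContinuousLinearMap.coe_smul',
    Pi.smul_apply, smul_eq_mul]
  simp only [fderiv_eq_grad]
  ring

end Analysis
section ExistsB

variable {n : ℕ} {U : Set (Fin n → ℝ)} {G : (Fin n → ℝ) → Matrix (Fin n) (Fin n) ℝ}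

lemma exists_b (hn : 0 < n)
    (hGs : ∀ i j, ContDiffOn ℝ (⊤ : ℕ∞) (fun x => G x i j) U) :
    ∃ b : ℕ → Fin n → ((Fin n → ℝ) → ℝ),
      (∀ m r, ContDiffOn ℝ (⊤ : ℕ∞) (b m r) U) ∧
      ∀ m : ℕ, ∀ x ∈ U, G x ^ m = ∑ r : Fin n, b m r x • G x ^ (r : ℕ) := by
  classical
  set χ : Fin n → ((Fin n → ℝ) → ℝ) := fun r x => -((G x).charpoly.coeff (r : ℕ)) with hχ
  have χsm : ∀ r, ContDiffOn ℝ (⊤ : ℕ∞) (χ r) U := by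
    intro r
    have hcomp : ContDiffOn ℝ (⊤ : ℕ∞) (fun x => (fun i j => G x i j)) U :=
      contDiffOn_pi.mpr fun i => contDiffOn_pi.mpr fun j => hGs i j
    have hc := (contDiff_charpoly_coeff (n := n) (r : ℕ)).comp_contDiffOn hcomp
    exact hc.neg
  have hCH : ∀ x, G x ^ n = ∑ r : Fin n, χ r x • G x ^ (r : ℕ) := fun x => cayley_pow_n (G x)
  have main : ∀ m : ℕ, ∃ bm : Fin n → ((Fin n → ℝ) → ℝ),
      (∀ r, ContDiffOn ℝ (⊤ : ℕ∞) (bm r) U) ∧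
      ∀ x ∈ U, G x ^ m = ∑ r : Fin n, bm r x • G x ^ (r : ℕ) := by
    intro m
    induction m using Nat.strong_induction_on with
    | _ m ih =>
      by_cases hm : m < n
      · refine ⟨fun r x => if (r : ℕ) = m then 1 else 0, fun r => ?_, fun x hx => ?_⟩
        · by_cases hr : (r : ℕ) = m
          · simp only [hr, if_pos]; exact contDiffOn_const
          · simp only [hr, if_neg, if_false]; exact contDiffOn_const
        · have e : ∀ r : Fin n, (if (r : ℕ) = m then (1 : ℝ) else 0) • G x ^ (r : ℕ)
              = if r = (⟨m, hm⟩ : Fin n) then G x ^ (r : ℕ) else 0 := by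
            intro r
            by_cases hr : r = (⟨m, hm⟩ : Fin n)
            · subst hr; simp
            · have hr' : ¬((r : ℕ) = m) := fun hc => hr (Fin.ext hc)
              simp [hr, hr']
          rw [Finset.sum_congr rfl fun r _ => e r, Finset.sum_ite_eq' Finset.univ]
          simp
      · push_neg at hm
        have key : ∀ x, G x ^ m = ∑ r : Fin n, χ r x • G x ^ ((r : ℕ) + (m - n)) := by
          intro x
          have e : G x ^ m = G x ^ n * G x ^ (m - n) := by
            rw [← pow_add]; congr 1; omega
          rw [e, hCH x, Finset.sum_mul]
          exact Finset.sum_congr rfl fun r _ => by rw [Matrix.smul_mul, ← pow_add]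
        have hlt : ∀ r : Fin n, (r : ℕ) + (m - n) < m := fun r => by
          have := r.2; omega
        choose bf bsm beq using fun r : Fin n => ih ((r : ℕ) + (m - n)) (hlt r)
        refine ⟨fun j x => ∑ r : Fin n, χ r x * bf r j x,
          fun j => ContDiffOn.sum fun r _ => (χsm r).mul (bsm r j), fun x hx => ?_⟩
        rw [key x]
        calc ∑ r : Fin n, χ r x • G x ^ ((r : ℕ) + (m - n))
            = ∑ r : Fin n, χ r x • ∑ j : Fin n, bf r j x • G x ^ (j : ℕ) :=
              Finset.sum_congr rfl fun r _ => by rw [beq r x hx]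
          _ = ∑ r : Fin n, ∑ j : Fin n, (χ r x * bf r j x) • G x ^ (j : ℕ) :=
              Finset.sum_congr rfl fun r _ => by
                rw [Finset.smul_sum]
                exact Finset.sum_congr rfl fun j _ => by rw [smul_smul]
          _ = ∑ j : Fin n, (∑ r : Fin n, χ r x * bf r j x) • G x ^ (j : ℕ) := by
              rw [Finset.sum_comm]
              exact Finset.sum_congr rfl fun j _ => (Finset.sum_smul).symm
  choose bb bsm beq using main
  exact ⟨bb, bsm, beq⟩

end ExistsB
section KeyAlg

variable {n : ℕ}

lemma key_alg {s : ℕ} (A : Matrix (Fin n) (Fin n) ℝ)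
    (Φ : (Fin n → ℝ) → Matrix (Fin n) (Fin n) ℝ)
    (hΦ : ∀ (c : Fin (s + 1) → ℝ) (w : Fin (s + 1) → (Fin n → ℝ)),
      Φ (∑ k, c k • w k) = ∑ k, c k • Φ (w k))
    (hN : ∀ u v, psiA A Φ u v = psiA A Φ v u)
    (c : Fin (s + 1) → ℝ) (g : Fin (s + 1) → (Fin n → ℝ)) (u v : Fin n → ℝ) :
    ((∑ k, (g k ⬝ᵥ (∑ k', c k' • A ^ (k' : ℕ)).mulVec u) • A ^ (k : ℕ))
        + ∑ l, c l • Sof A (Φ ((∑ k', c k' • A ^ (k' : ℕ)).mulVec u)) (l : ℕ)).mulVec v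
      - ((∑ k, (g k ⬝ᵥ (∑ k', c k' • A ^ (k' : ℕ)).mulVec v) • A ^ (k : ℕ))
        + ∑ l, c l • Sof A (Φ ((∑ k', c k' • A ^ (k' : ℕ)).mulVec v)) (l : ℕ)).mulVec u
      + (∑ k', c k' • A ^ (k' : ℕ)).mulVec
          (((∑ k, (g k ⬝ᵥ v) • A ^ (k : ℕ)) + ∑ l, c l • Sof A (Φ v) (l : ℕ)).mulVec u)
      - (∑ k', c k' • A ^ (k' : ℕ)).mulVec
          (((∑ k, (g k ⬝ᵥ u) • A ^ (k : ℕ)) + ∑ l, c l • Sof A (Φ u) (l : ℕ)).mulVec v)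
      = ∑ k : Fin (s + 1), ∑ l : Fin (s + 1), c l •
          ((g k ⬝ᵥ (A ^ (l : ℕ)).mulVec u) • (A ^ (k : ℕ)).mulVec v
            - (g k ⬝ᵥ (A ^ (l : ℕ)).mulVec v) • (A ^ (k : ℕ)).mulVec u
            + (g k ⬝ᵥ v) • (A ^ ((k : ℕ) + (l : ℕ))).mulVec u
            - (g k ⬝ᵥ u) • (A ^ ((k : ℕ) + (l : ℕ))).mulVec v) := by
  rw [Matrix.add_mulVec, Matrix.add_mulVec, Matrix.add_mulVec, Matrix.add_mulVec,
    Matrix.mulVec_add, Matrix.mulVec_add]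
  calc _ = ((∑ k, (g k ⬝ᵥ (∑ k', c k' • A ^ (k' : ℕ)).mulVec u) • A ^ (k : ℕ)).mulVec v
      - (∑ k, (g k ⬝ᵥ (∑ k', c k' • A ^ (k' : ℕ)).mulVec v) • A ^ (k : ℕ)).mulVec u
      + (∑ k', c k' • A ^ (k' : ℕ)).mulVec ((∑ k, (g k ⬝ᵥ v) • A ^ (k : ℕ)).mulVec u)
      - (∑ k', c k' • A ^ (k' : ℕ)).mulVec ((∑ k, (g k ⬝ᵥ u) • A ^ (k : ℕ)).mulVec v))
      + ((∑ l, c l • Sof A (Φ ((∑ k', c k' • A ^ (k' : ℕ)).mulVec u)) (l : ℕ)).mulVec v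
      - (∑ l, c l • Sof A (Φ ((∑ k', c k' • A ^ (k' : ℕ)).mulVec v)) (l : ℕ)).mulVec u
      + (∑ k', c k' • A ^ (k' : ℕ)).mulVec ((∑ l, c l • Sof A (Φ v) (l : ℕ)).mulVec u)
      - (∑ k', c k' • A ^ (k' : ℕ)).mulVec ((∑ l, c l • Sof A (Φ u) (l : ℕ)).mulVec v)) := by
        abel
    _ = _ := by
        rw [grad_part A c g u v, phi_part A Φ hΦ hN c u v, add_zero]

end KeyAlg

set_option maxHeartbeats 1000000 in
/-- Lemma A.1: if `N_G = 0` and `H = Σ_k h_k·Gᵏ`, then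
`N_H(x)(u,v) = Σ_j (α_j(u)·Gʲv − α_j(v)·Gʲu)` where each `α_j` is a functional combination of
the 1-forms `dh_k∘Gʳ`; in particular `N_H = 0` when the `h_k` are constant. -/
theorem lemma_A_1 {n s : ℕ} (U : Set (Fin n → ℝ)) (hU : IsOpen U)
    (G : (Fin n → ℝ) → Matrix (Fin n) (Fin n) ℝ)
    (hGs : ∀ i j, ContDiffOn ℝ (⊤ : ℕ∞) (fun x => G x i j) U)
    (hNG : ∀ x ∈ U, ∀ u v : Fin n → ℝ, nijenhuis G x u v = 0)
    (h : Fin (s + 1) → (Fin n → ℝ) → ℝ)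
    (hh : ∀ k, ContDiffOn ℝ (⊤ : ℕ∞) (h k) U) :
    (∃ c : Fin n → Fin (s + 1) → Fin n → ((Fin n → ℝ) → ℝ),
      (∀ j k r, ContDiffOn ℝ (⊤ : ℕ∞) (c j k r) U) ∧
      ∀ x ∈ U, ∀ u v : Fin n → ℝ,
        nijenhuis (fun y => ∑ k, h k y • G y ^ (k : ℕ)) x u v
          = ∑ j : Fin n,
              (((∑ k, ∑ r, c j k r x • ((G x ^ (r : ℕ))ᵀ.mulVec (gradV (h k) x))) ⬝ᵥ u)
                  • (G x ^ (j : ℕ)).mulVec v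
                - ((∑ k, ∑ r, c j k r x • ((G x ^ (r : ℕ))ᵀ.mulVec (gradV (h k) x))) ⬝ᵥ v)
                  • (G x ^ (j : ℕ)).mulVec u)) ∧
    ((∀ k, ∃ ck : ℝ, ∀ x, h k x = ck) →
      ∀ x ∈ U, ∀ u v : Fin n → ℝ,
        nijenhuis (fun y => ∑ k, h k y • G y ^ (k : ℕ)) x u v = 0) := by
  rcases Nat.eq_zero_or_pos n with hn0 | hn
  · subst hn0
    exact ⟨⟨fun j => j.elim0, fun j => j.elim0, fun x _ u v => Subsingleton.elim _ _⟩,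
      fun _ x _ u v => Subsingleton.elim _ _⟩
  · obtain ⟨b, bsm, hb⟩ := exists_b hn hGs
    have hgzero : (∀ k, ∃ ck : ℝ, ∀ x, h k x = ck) → ∀ (k : Fin (s + 1)) (x : Fin n → ℝ),
        gradV (h k) x = 0 := by
      intro hc k x
      obtain ⟨ck, hck⟩ := hc k
      have he : h k = fun _ => ck := funext hck
      funext i
      rw [gradV, he, fderiv_fun_const]
      simp
    have main : ∀ x ∈ U, ∀ u v : Fin n → ℝ,
        nijenhuis (fun y => ∑ k, h k y • G y ^ (k : ℕ)) x u v
          = ∑ j : Fin n,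
              (((∑ k : Fin (s + 1), ∑ r : Fin n, (∑ l : Fin (s + 1), h l x *
                    (b (l : ℕ) r x * b (k : ℕ) j x
                      - (if r = (⟨0, hn⟩ : Fin n) then (1 : ℝ) else 0)
                        * b ((k : ℕ) + (l : ℕ)) j x))
                  • ((G x ^ (r : ℕ))ᵀ.mulVec (gradV (h k) x))) ⬝ᵥ u)
                  • (G x ^ (j : ℕ)).mulVec v
                - ((∑ k : Fin (s + 1), ∑ r : Fin n, (∑ l : Fin (s + 1), h l x *
                    (b (l : ℕ) r x * b (k : ℕ) j x
                      - (if r = (⟨0, hn⟩ : Fin n) then (1 : ℝ) else 0)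
                        * b ((k : ℕ) + (l : ℕ)) j x))
                  • ((G x ^ (r : ℕ))ᵀ.mulVec (gradV (h k) x))) ⬝ᵥ v)
                  • (G x ^ (j : ℕ)).mulVec u) := by
      intro x hx u v
      have hN : ∀ a b' : Fin n → ℝ,
          psiA (G x) (matDirDeriv G x) a b' = psiA (G x) (matDirDeriv G x) b' a := by
        intro a b'
        have h0 : psiA (G x) (matDirDeriv G x) a b' - psiA (G x) (matDirDeriv G x) b' a
            = nijenhuis G x a b' := by
          unfold psiA nijenhuis
          abel
        rw [hNG x hx a b'] at h0
        exact sub_eq_zero.mp h0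
      have hΦ : ∀ (cf : Fin (s + 1) → ℝ) (wf : Fin (s + 1) → (Fin n → ℝ)),
          matDirDeriv G x (∑ k, cf k • wf k) = ∑ k, cf k • matDirDeriv G x (wf k) :=
        fun cf wf => matDirDeriv_lin G x cf wf
      have hbx : ∀ m : ℕ, G x ^ m = ∑ r : Fin n, b m r x • G x ^ (r : ℕ) :=
        fun m => hb m x hx
      simp only [nijenhuis]
      rw [matDirDeriv_H hU hGs h hh hx, matDirDeriv_H hU hGs h hh hx,
        matDirDeriv_H hU hGs h hh hx, matDirDeriv_H hU hGs h hh hx]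
      exact (key_alg (G x) (matDirDeriv G x) hΦ hN (fun k => h k x)
          (fun k => gradV (h k) x) u v).trans
        (reduce_eq hn (G x) (fun m r => b m r x) hbx (fun k => h k x)
          (fun k => gradV (h k) x) u v)
    refine ⟨⟨fun j k r x => ∑ l : Fin (s + 1), h l x *
        (b (l : ℕ) r x * b (k : ℕ) j x
          - (if r = (⟨0, hn⟩ : Fin n) then (1 : ℝ) else 0) * b ((k : ℕ) + (l : ℕ)) j x),
      ?_, main⟩, ?_⟩
    · intro j k r
      exact ContDiffOn.sum fun l _ => (hh l).mul
        (((bsm (l : ℕ) r).mul (bsm (k : ℕ) j)).sub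
          (contDiffOn_const.mul (bsm ((k : ℕ) + (l : ℕ)) j)))
    · intro hc x hx u v
      rw [main x hx u v]
      simp [hgzero hc]
end

section
/- (Construction of the complex structure, proof of Theorem 5.1.) Let m ≥ 1, f, g ∈ ℝ with f² < 4g, and let A be an endomorphism of a 2m-dimensional real vector space (equivalently A ∈ Matrix (Fin (2m)) (Fin (2m)) ℝ) whose characteristic polynomial equals (X² + f·X + g)^m. Put H₀ = (4g − f²)^{−1/2}·(2A + f·1). Then: (a) (H₀² + 1)^m = 0; (b) for every decomposition H₀ = H + N₀ with H semisimple, N₀ nilpotent and H·N₀ = N₀·H (the Jordan–Chevalley decomposition of H₀), one has H² = −1 and (A + (1/2)·(f·1 − (4g − f²)^{1/2}·H))^m = 0. -/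
open Polynomial

/-- Construction of the complex structure in the proof of Theorem 5.1: if the characteristic
polynomial of `A` is `(X² + fX + g)^m` with `f² < 4g`, and `H₀ = (4g−f²)^{−1/2}(2A + f·1)`,
then `(H₀² + 1)^m = 0`, and for any Jordan–Chevalley decomposition `H₀ = H + N₀` (with `H`
semisimple, `N₀` nilpotent, commuting) one has `H² = −1` and
`(A + (1/2)(f·1 − (4g−f²)^{1/2}·H))^m = 0`. -/
theorem thm_5_1_complex_structure {m : ℕ} (hm : 1 ≤ m) (f g : ℝ) (hfg : f ^ 2 < 4 * g)
    (A : Matrix (Fin (2 * m)) (Fin (2 * m)) ℝ)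
    (hchar : A.charpoly = ((X : ℝ[X]) ^ 2 + C f * X + C g) ^ m) :
    ((((Real.sqrt (4 * g - f ^ 2))⁻¹ • ((2 : ℝ) • A + f • 1)) ^ 2 + 1) ^ m = 0 ∧
      ∀ H N₀ : Matrix (Fin (2 * m)) (Fin (2 * m)) ℝ,
        (Real.sqrt (4 * g - f ^ 2))⁻¹ • ((2 : ℝ) • A + f • 1) = H + N₀ →
        (∀ p : Submodule ℝ (Fin (2 * m) → ℝ), (∀ x ∈ p, H.mulVec x ∈ p) →
          ∃ p' : Submodule ℝ (Fin (2 * m) → ℝ),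
            (∀ x ∈ p', H.mulVec x ∈ p') ∧ IsCompl p p') →
        IsNilpotent N₀ → H * N₀ = N₀ * H →
        H ^ 2 = -1 ∧
          (A + (2⁻¹ : ℝ) • (f • 1 - Real.sqrt (4 * g - f ^ 2) • H)) ^ m = 0) := by
  have hpos : (0:ℝ) < 4 * g - f ^ 2 := by linarith
  set s : ℝ := Real.sqrt (4 * g - f ^ 2) with hs_def
  have hs2 : s ^ 2 = 4 * g - f ^ 2 := Real.sq_sqrt hpos.le
  have hspos : 0 < s := Real.sqrt_pos.mpr hpos
  have hsne : s ≠ 0 := ne_of_gt hspos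
  -- Cayley–Hamilton
  have hCH : (A ^ 2 + f • A + g • (1 : Matrix (Fin (2*m)) (Fin (2*m)) ℝ)) ^ m = 0 := by
    have h0 := Matrix.aeval_self_charpoly A
    rw [hchar] at h0
    simpa [map_pow, map_add, map_mul, Algebra.algebraMap_eq_smul_one, smul_mul_assoc,
      one_mul] using h0
  set B : Matrix (Fin (2*m)) (Fin (2*m)) ℝ := A ^ 2 + f • A + g • 1 with hB_def
  -- the key scalar identity
  have hkey : (s⁻¹ • ((2 : ℝ) • A + f • 1)) ^ 2 + 1 = (4 * (s⁻¹)^2) • B := by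
    have hexp : ((2 : ℝ) • A + f • 1) ^ 2
        = (4:ℝ) • A ^ 2 + (4*f) • A + (f^2) • (1 : Matrix (Fin (2*m)) (Fin (2*m)) ℝ) := by
      rw [sq]
      simp only [add_mul, mul_add, smul_mul_assoc, mul_smul_comm, smul_smul, mul_one, one_mul]
      rw [← sq]
      match_scalars <;> ring
    rw [_root_.smul_pow, hexp, hB_def]
    have h1 : s⁻¹ ^ 2 * f ^ 2 + 1 = 4 * s⁻¹ ^ 2 * g := by
      field_simp
      linarith [hs2]
    match_scalars
    · ring
    · ring
    · field_simp
      linarith [hs2]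
  have parta : ((s⁻¹ • ((2 : ℝ) • A + f • 1)) ^ 2 + 1) ^ m = 0 := by
    rw [hkey, _root_.smul_pow, hCH, smul_zero]
  refine ⟨parta, ?_⟩
  intro H N₀ hHN hss hnil hcomm
  have hcomm' : Commute H N₀ := hcomm
  -- part (a) in terms of H + N₀
  have parta' : ((H + N₀) ^ 2 + 1) ^ m = 0 := by rw [← hHN]; exact parta
  set u : Matrix (Fin (2*m)) (Fin (2*m)) ℝ := (2:ℝ) • H + N₀ with hu_def
  have cN₀u : Commute N₀ u := (hcomm'.symm.smul_right 2).add_right (Commute.refl N₀)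
  have cHu : Commute H u := ((Commute.refl H).smul_right 2).add_right hcomm'
  -- key algebraic identity
  have key2 : H ^ 2 + 1 = ((H + N₀) ^ 2 + 1) - u * N₀ := by
    rw [hu_def, sq, sq, add_mul, mul_add, mul_add, add_mul, smul_mul_assoc, hcomm]
    module
  have nilv : IsNilpotent (u * N₀) := Commute.isNilpotent_mul_left cN₀u.symm hnil
  have cwv : Commute ((H + N₀) ^ 2 + 1) (u * N₀) :=
    (((cHu.add_left cN₀u).mul_right (hcomm'.add_left (Commute.refl N₀)).symm.symm).pow_left
      2).add_left (Commute.one_left _)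
  have cwv : Commute ((H + N₀) ^ 2 + 1) (u * N₀) := by
    have c1 : Commute (H + N₀) (u * N₀) :=
      (cHu.add_left cN₀u).mul_right ((hcomm'.add_left (Commute.refl N₀)))
    exact (c1.pow_left 2).add_left (Commute.one_left _)
  have nilH2 : IsNilpotent (H ^ 2 + 1) := by
    rw [key2]
    exact cwv.isNilpotent_sub ⟨m, parta'⟩ nilv
  -- semisimplicity: pass to linear endomorphisms
  set φ := (Matrix.toLinAlgEquiv' : Matrix (Fin (2*m)) (Fin (2*m)) ℝ ≃ₐ[ℝ] _) with hφ
  set e : Module.End ℝ (Fin (2*m) → ℝ) := φ H with he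
  have hsemi : e.IsSemisimple := by
    rw [Module.End.isSemisimple_iff]
    intro p hp
    obtain ⟨p', hp'1, hp'2⟩ := hss p (by
      intro x hx
      have := hp hx
      simpa [he, hφ, Matrix.toLinAlgEquiv'_apply] using this)
    exact ⟨p', by intro x hx; simpa [he, hφ, Matrix.toLinAlgEquiv'_apply] using hp'1 x hx, hp'2⟩
  have hnile : IsNilpotent (e ^ 2 + 1) := by
    have : e ^ 2 + 1 = φ (H ^ 2 + 1) := by simp [he]
    rw [this]
    exact nilH2.map _
  have hsse : (e ^ 2 + 1).IsSemisimple := by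
    have : e ^ 2 + 1 = aeval e ((X:ℝ[X]) ^ 2 + 1) := by simp
    rw [this]
    exact hsemi.aeval _
  have he2 : e ^ 2 + 1 = 0 := Module.End.eq_zero_of_isNilpotent_isSemisimple hnile hsse
  have hH2 : H ^ 2 = -1 := by
    have : φ (H ^ 2 + 1) = φ 0 := by simpa [he] using he2
    have h0 : H ^ 2 + 1 = 0 := φ.injective this
    exact eq_neg_of_add_eq_zero_left h0
  refine ⟨hH2, ?_⟩
  -- N₀ ^ m = 0
  have key3 : N₀ * u = (H + N₀) ^ 2 + 1 := by
    have h0 : H ^ 2 + 1 = 0 := by simp [hH2]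
    have := key2
    rw [h0] at this
    have h1 : u * N₀ = (H + N₀) ^ 2 + 1 := (sub_eq_zero.mp this.symm).symm
    rw [cN₀u.eq]
    exact h1
  have hNm : N₀ ^ m = 0 := by
    have h1 : N₀ ^ m * u ^ m = 0 := by
      rw [← cN₀u.mul_pow, key3, parta']
    have hmul1 : ((2:ℝ) • H) * ((-(2⁻¹:ℝ)) • H) = 1 := by
      rw [smul_mul_smul_comm, ← sq, hH2]
      norm_num [smul_neg, neg_smul]
    have hmul2 : ((-(2⁻¹:ℝ)) • H) * ((2:ℝ) • H) = 1 := by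
      rw [smul_mul_smul_comm, ← sq, hH2]
      norm_num [smul_neg, neg_smul]
    have hu2H : IsUnit ((2:ℝ) • H) := ⟨⟨_, _, hmul1, hmul2⟩, rfl⟩
    have huu : IsUnit u := by
      rw [hu_def]
      exact hnil.isUnit_add_left_of_commute hu2H ((hcomm'.symm).smul_right 2)
    exact ((huu.pow m).mul_left_eq_zero).mp h1
  -- final identity
  have e1 : (2:ℝ) • A + f • (1 : Matrix (Fin (2*m)) (Fin (2*m)) ℝ) = s • H + s • N₀ := by
    have := congrArg (fun M => s • M) hHN
    simpa [smul_smul, smul_add, ← mul_assoc, mul_inv_cancel₀ hsne] using this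
  have e2 : A + (2⁻¹ : ℝ) • (f • (1 : Matrix (Fin (2*m)) (Fin (2*m)) ℝ) - s • H)
      = (2⁻¹ * s) • N₀ := by
    have e3 : A + (2⁻¹ : ℝ) • (f • (1 : Matrix (Fin (2*m)) (Fin (2*m)) ℝ) - s • H)
        = (2⁻¹:ℝ) • ((2:ℝ) • A + f • 1) - (2⁻¹:ℝ) • (s • H) := by
      match_scalars <;> ring
    rw [e3, e1]
    match_scalars <;> ring
  rw [e2, _root_.smul_pow, hNm, smul_zero]
end

section
/- (Lemma 8.2, local coordinate form.) Let U ⊆ ℝⁿ × ℝᵐ be open (points (x,y)), a₁,…,a_n ∈ ℝ∖{0}, V ⊆ ℝᵐ an open set containing the y-projection of U, H : V → Matrix (Fin m) (Fin m) ℝ a C^∞ matrix field depending only on y, and X₁,…,X_n : U → ℝᵐ C^∞ maps. Define G″ : U → Matrix (Fin (n+m)) (Fin (n+m)) ℝ by G″(x,y)(ξ,η) = ((a_j·ξ_j)_{j=1,…,n}, H(y)·η + Σ_{j=1}^{n} ξ_j·X_j(x,y)) (i.e. G″ = J + H + Σ_j X_j ⊗ dx_j with J = Σ_j a_j (∂/∂x_j)⊗dx_j).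 If the Nijenhuis torsion of G″ vanishes on U, then for every j = 1,…,n, every (x,y) ∈ U and every v ∈ ℝᵐ: (DH(y)(X_j(x,y)))·v − D_yX_j(x,y)·(H(y)·v) + H(y)·(D_yX_j(x,y)·v) = 0, where D_yX_j denotes the partial derivative of X_j in the y-variables; that is, the Lie derivative L_{X_j}H vanishes on the fibers x = const. -/
open Matrix

/-- Nijenhuis torsion of a (1,1)-tensor field on a Euclidean space, given by its action
`A x : E → E` (pointwise linear by construction):
`N(x)(u,v) = (DA(x)(A(x)u))·v − (DA(x)(A(x)v))·u + A(x)·((DA(x)v)·u) − A(x)·((DA(x)u)·v)`. -/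
noncomputable def nijOp {E : Type*} [NormedAddCommGroup E] [NormedSpace ℝ E]
    (A : E → E → E) (x u v : E) : E :=
  fderiv ℝ (fun y => A y v) x (A x u) - fderiv ℝ (fun y => A y u) x (A x v)
    + A x (fderiv ℝ (fun y => A y u) x v) - A x (fderiv ℝ (fun y => A y v) x u)

/-- Directional derivative of a matrix field on `ℝᵐ`, entrywise. -/
noncomputable def matDirDerivY {m : ℕ} (H : (Fin m → ℝ) → Matrix (Fin m) (Fin m) ℝ)
    (y w : Fin m → ℝ) : Matrix (Fin m) (Fin m) ℝ :=
  Matrix.of fun i j => fderiv ℝ (fun y' => H y' i j) y w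

/-- The tensor field `G″ = J + H + Σ_j X_j ⊗ dx_j` acting on `ℝⁿ × ℝᵐ`. -/
noncomputable def Gact {n m : ℕ} (a : Fin n → ℝ)
    (H : (Fin m → ℝ) → Matrix (Fin m) (Fin m) ℝ)
    (X : Fin n → (Fin n → ℝ) × (Fin m → ℝ) → (Fin m → ℝ))
    (p : (Fin n → ℝ) × (Fin m → ℝ)) (w : (Fin n → ℝ) × (Fin m → ℝ)) :
    (Fin n → ℝ) × (Fin m → ℝ) :=
  (fun j => a j * w.1 j, (H p.2).mulVec w.2 + ∑ j, w.1 j • X j p)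

/-- Auxiliary: the derivative (as a continuous linear map) of `q ↦ Gact a H X q w`
at `p`, restricted to the second (`ℝᵐ`) component. -/
noncomputable def d2Aux {n m : ℕ} (H : (Fin m → ℝ) → Matrix (Fin m) (Fin m) ℝ)
    (X : Fin n → (Fin n → ℝ) × (Fin m → ℝ) → (Fin m → ℝ))
    (p w : (Fin n → ℝ) × (Fin m → ℝ)) :
    ((Fin n → ℝ) × (Fin m → ℝ)) →L[ℝ] (Fin m → ℝ) :=
  (ContinuousLinearMap.pi fun i => ∑ l, w.2 l •
      ((fderiv ℝ (fun y => H y i l) p.2).comp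
        (ContinuousLinearMap.snd ℝ (Fin n → ℝ) (Fin m → ℝ))))
    + ∑ k, w.1 k • fderiv ℝ (X k) p

lemma hasFDerivAt_Gact {n m : ℕ} (a : Fin n → ℝ)
    (H : (Fin m → ℝ) → Matrix (Fin m) (Fin m) ℝ)
    (X : Fin n → (Fin n → ℝ) × (Fin m → ℝ) → (Fin m → ℝ))
    (p : (Fin n → ℝ) × (Fin m → ℝ))
    (hH : ∀ i l, HasFDerivAt (fun y => H y i l) (fderiv ℝ (fun y => H y i l) p.2) p.2)
    (hX : ∀ k, HasFDerivAt (X k) (fderiv ℝ (X k) p) p)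
    (w : (Fin n → ℝ) × (Fin m → ℝ)) :
    HasFDerivAt (fun q => Gact a H X q w)
      ((0 : ((Fin n → ℝ) × (Fin m → ℝ)) →L[ℝ] (Fin n → ℝ)).prod (d2Aux H X p w)) p := by
  have h1 : HasFDerivAt (fun q : (Fin n → ℝ) × (Fin m → ℝ) => (H q.2).mulVec w.2)
      (ContinuousLinearMap.pi fun i => ∑ l, w.2 l •
        ((fderiv ℝ (fun y => H y i l) p.2).comp
          (ContinuousLinearMap.snd ℝ (Fin n → ℝ) (Fin m → ℝ)))) p := by
    rw [show (fun q : (Fin n → ℝ) × (Fin m → ℝ) => (H q.2).mulVec w.2)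
        = fun q i => ∑ l, H q.2 i l * w.2 l by
      funext q; ext i; simp [Matrix.mulVec, dotProduct]]
    exact hasFDerivAt_pi.2 fun i => HasFDerivAt.fun_sum fun l _ =>
      ((hH i l).comp p hasFDerivAt_snd).mul_const (w.2 l)
  have h2 : HasFDerivAt (fun q : (Fin n → ℝ) × (Fin m → ℝ) => ∑ k, w.1 k • X k q)
      (∑ k, w.1 k • fderiv ℝ (X k) p) p :=
    HasFDerivAt.fun_sum fun k _ => (hX k).const_smul (w.1 k)
  exact HasFDerivAt.prodMk (hasFDerivAt_const (fun j => a j * w.1 j) p) (h1.add h2)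

/-- Lemma 8.2 (local coordinate form): if the Nijenhuis torsion of
`G″ = J + H + Σ_j X_j ⊗ dx_j` vanishes, then `L_{X_j} H = 0` along the fibers
`x = const`, i.e. `(DH(X_j))v − DX_j(Hv) + H(DX_j v) = 0`. -/
theorem lemma_8_2 {n m : ℕ} (U : Set ((Fin n → ℝ) × (Fin m → ℝ))) (hU : IsOpen U)
    (a : Fin n → ℝ) (ha : ∀ j, a j ≠ 0)
    (V : Set (Fin m → ℝ)) (hV : IsOpen V) (hUV : Prod.snd '' U ⊆ V)
    (H : (Fin m → ℝ) → Matrix (Fin m) (Fin m) ℝ)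
    (hHs : ∀ i j, ContDiffOn ℝ (⊤ : ℕ∞) (fun y => H y i j) V)
    (X : Fin n → (Fin n → ℝ) × (Fin m → ℝ) → (Fin m → ℝ))
    (hXs : ∀ j, ContDiffOn ℝ (⊤ : ℕ∞) (X j) U)
    (hnij : ∀ p ∈ U, ∀ u v : (Fin n → ℝ) × (Fin m → ℝ), nijOp (Gact a H X) p u v = 0) :
    ∀ j : Fin n, ∀ p ∈ U, ∀ v : Fin m → ℝ,
      (matDirDerivY H p.2 (X j p)).mulVec v
          - fderiv ℝ (fun y => X j (p.1, y)) p.2 ((H p.2).mulVec v)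
          + (H p.2).mulVec (fderiv ℝ (fun y => X j (p.1, y)) p.2 v) = 0 := by
  intro j p hp v
  have hp2 : p.2 ∈ V := hUV ⟨p, hp, rfl⟩
  have hXd : ∀ k, HasFDerivAt (X k) (fderiv ℝ (X k) p) p := fun k =>
    ((((hXs k).differentiableOn (by simp)).differentiableAt (hU.mem_nhds hp))).hasFDerivAt
  have hHd : ∀ i l, HasFDerivAt (fun y => H y i l) (fderiv ℝ (fun y => H y i l) p.2) p.2 :=
    fun i l =>
      ((((hHs i l).differentiableOn (by simp)).differentiableAt (hV.mem_nhds hp2))).hasFDerivAt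
  -- the partial derivative in `y` equals the full derivative applied to `(0, ·)`
  have hyfd : ∀ w : Fin m → ℝ,
      fderiv ℝ (fun y => X j (p.1, y)) p.2 w = fderiv ℝ (X j) p (0, w) := by
    intro w
    have hin : HasFDerivAt (fun y : Fin m → ℝ => ((p.1, y) : (Fin n → ℝ) × (Fin m → ℝ)))
        ((0 : (Fin m → ℝ) →L[ℝ] (Fin n → ℝ)).prod (ContinuousLinearMap.id ℝ (Fin m → ℝ)))
        p.2 := HasFDerivAt.prodMk (hasFDerivAt_const p.1 p.2) (hasFDerivAt_id p.2)
    have hc : HasFDerivAt (fun y => X j (p.1, y))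
        ((fderiv ℝ (X j) p).comp
          ((0 : (Fin m → ℝ) →L[ℝ] (Fin n → ℝ)).prod (ContinuousLinearMap.id ℝ (Fin m → ℝ))))
        p.2 := (hXd j).comp p.2 hin
    rw [hc.fderiv]; rfl
  -- choose the test vectors
  set u0 : (Fin n → ℝ) × (Fin m → ℝ) := (Pi.single j 1, 0) with hu0
  set v0 : (Fin n → ℝ) × (Fin m → ℝ) := ((0 : Fin n → ℝ), v) with hv0
  have key := hnij p hp u0 v0
  rw [nijOp, (hasFDerivAt_Gact a H X p hHd hXd u0).fderiv,
    (hasFDerivAt_Gact a H X p hHd hXd v0).fderiv] at key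
  have key2 := congrArg Prod.snd key
  -- evaluate all four terms
  have e1 : (d2Aux H X p v0) (Gact a H X p u0) = (matDirDerivY H p.2 (X j p)).mulVec v := by
    ext i
    simp [d2Aux, Gact, matDirDerivY, Matrix.mulVec, dotProduct, hu0, hv0,
      Pi.single_apply, mul_comm]
  have e2 : (d2Aux H X p u0) (Gact a H X p v0) = fderiv ℝ (X j) p (0, (H p.2).mulVec v) := by
    have hGv : (Gact a H X p v0) = ((0 : Fin n → ℝ), (H p.2).mulVec v) := by
      unfold Gact
      refine Prod.ext ?_ ?_
      · funext k; simp [hv0]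
      · simp [hv0]
    rw [hGv]; ext i
    simp [d2Aux, hu0, Pi.single_apply]
  have e3 : (d2Aux H X p u0) v0 = fderiv ℝ (X j) p (0, v) := by
    ext i
    simp [d2Aux, hu0, hv0, Pi.single_apply]
  have e4 : (d2Aux H X p v0) u0 = 0 := by
    ext i
    simp [d2Aux, hu0, hv0]
  simp only [ContinuousLinearMap.prod_apply, Prod.snd_sub, Prod.snd_add, Prod.fst_sub,
    Prod.fst_add, e1, e2, e3, e4] at key2
  rw [hyfd, hyfd]
  simpa [Gact] using key2
end
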